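/- For N ≥ 1 and d ≥ 1, ∑_{m ∈ Σ_{d,N}} m^{-1} ≤ (1/d) · ( ∑_{m ∈ Π_N} m^{-1/d} )^d, and ∑_{m ∈ Π_N} m^{-1/d} = ∏_{p prime, p ≤ N} 1/(1 - p^{-1/d}) < ∞. -/
import Mathlib

/-- `Π_N`: the `N`-smooth positive integers. -/
def PiSet (N : ℕ) : Set ℕ := {m | 0 < m ∧ ∀ p : ℕ, p.Prime → p ∣ m → p ≤ N}

/-- `Σ_{d,N}`: sums of exactly `d` elements of `Π_N`. -/
def SigmaSet (d N : ℕ) : Set ℕ :=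
  {m | ∃ f : Fin d → ℕ, (∀ i, f i ∈ PiSet N) ∧ ∑ i, f i = m}

set_option maxHeartbeats 1000000 in
/-- Summing a product over a pi type indexed by `Fin d`. -/
lemma aux_pi_prod {β : Type*} (g : β → ℝ) (hg0 : ∀ b, 0 ≤ g b) (hg : Summable g) :
    ∀ d : ℕ, Summable (fun f : Fin d → β => ∏ i, g (f i)) ∧
      (∑' f : Fin d → β, ∏ i, g (f i)) = (∑' b, g b) ^ d := by
  intro d
  induction d with
  | zero =>
    constructor
    · exact Summable.of_finite
    · rw [tsum_eq_single (default : Fin 0 → β)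
        (fun b hb => (hb (Subsingleton.elim b default)).elim)]
      simp
  | succ n ih =>
    set e := Fin.consEquiv (fun _ : Fin (n + 1) => β) with he
    have hh : Summable (fun p : β × (Fin n → β) => g p.1 * ∏ i, g (p.2 i)) :=
      Summable.mul_of_nonneg (f := g) (g := fun f : Fin n → β => ∏ i, g (f i)) hg ih.1 hg0
        (fun f => Finset.prod_nonneg fun i _ => hg0 _)
    have hcomp : ∀ p : β × (Fin n → β), (∏ i, g ((e p) i)) = g p.1 * ∏ i, g (p.2 i) := by
      intro p
      rw [Fin.prod_univ_succ]
      simp [he, Fin.consEquiv]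
    constructor
    · rw [← e.summable_iff]
      exact hh.congr fun p => (hcomp p).symm
    · rw [← e.tsum_eq]
      calc ∑' p : β × (Fin n → β), ∏ i, g ((e p) i)
          = ∑' p : β × (Fin n → β), g p.1 * ∏ i, g (p.2 i) := tsum_congr hcomp
        _ = (∑' b, g b) * ∑' f : Fin n → β, ∏ i, g (f i) := (Summable.tsum_mul_tsum (f := g) (g := fun f : Fin n → β => ∏ i, g (f i)) hg ih.1 hh).symm
        _ = (∑' b, g b) ^ (n + 1) := by rw [ih.2, pow_succ, mul_comm]

/-- AM–GM bound: `1/(m₁+⋯+m_d) ≤ (1/d) ∏ mᵢ^(-1/d)`. -/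
lemma aux_amgm (d : ℕ) (hd : 1 ≤ d) (f : Fin d → ℕ) (hf : ∀ i, 1 ≤ f i) :
    (1 : ℝ) / (∑ i, f i : ℕ) ≤ (1 / d) * ∏ i, ((f i : ℝ)) ^ (-(1 : ℝ) / d) := by
  have hd0 : (0 : ℝ) < d := by exact_mod_cast hd
  have hfi : ∀ i, (0 : ℝ) < (f i : ℝ) := fun i => by exact_mod_cast hf i
  haveI : NeZero d := ⟨Nat.one_le_iff_ne_zero.mp hd⟩
  set G : ℝ := ∏ i, ((f i : ℝ)) ^ ((d : ℝ)⁻¹) with hGdef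
  have hG : 0 < G :=
    Finset.prod_pos fun i _ => Real.rpow_pos_of_pos (hfi i) _
  have hamgm : G ≤ (d : ℝ)⁻¹ * ∑ i, (f i : ℝ) := by
    rw [Finset.mul_sum]
    exact Real.geom_mean_le_arith_mean_weighted Finset.univ
      (fun _ : Fin d => (d : ℝ)⁻¹) (fun i => (f i : ℝ))
      (fun i _ => by positivity)
      (by simp [Finset.sum_const, Finset.card_univ, mul_inv_cancel₀ hd0.ne'])
      (fun i _ => (hfi i).le)
  have hsum : (0 : ℝ) < ∑ i, (f i : ℝ) :=
    Finset.sum_pos (fun i _ => hfi i) Finset.univ_nonempty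
  have hdG : (d : ℝ) * G ≤ ∑ i, (f i : ℝ) := by
    calc (d : ℝ) * G ≤ (d : ℝ) * ((d : ℝ)⁻¹ * ∑ i, (f i : ℝ)) := by
          exact mul_le_mul_of_nonneg_left hamgm hd0.le
      _ = ∑ i, (f i : ℝ) := by rw [← mul_assoc, mul_inv_cancel₀ hd0.ne', one_mul]
  have h1 : (1 : ℝ) / (∑ i, (f i : ℝ)) ≤ 1 / ((d : ℝ) * G) :=
    one_div_le_one_div_of_le (by positivity) hdG
  have hGinv : G⁻¹ = ∏ i, ((f i : ℝ)) ^ (-(1 : ℝ) / d) := by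
    rw [hGdef, ← Finset.prod_inv_distrib]
    refine Finset.prod_congr rfl fun i _ => ?_
    rw [neg_div, one_div, Real.rpow_neg (hfi i).le]
  calc (1 : ℝ) / (∑ i, f i : ℕ) = 1 / (∑ i, (f i : ℝ)) := by push_cast; rfl
    _ ≤ 1 / ((d : ℝ) * G) := h1
    _ = (1 / d) * G⁻¹ := by rw [one_div, mul_inv, one_div]
    _ = (1 / d) * ∏ i, ((f i : ℝ)) ^ (-(1 : ℝ) / d) := by rw [hGinv]

theorem sigma_sum_bound_and_euler_product (N d : ℕ) (hN : 1 ≤ N) (hd : 1 ≤ d) :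
    Summable (fun m : PiSet N => ((m : ℕ) : ℝ) ^ (-(1 : ℝ) / d)) ∧
    Summable (fun m : SigmaSet d N => (1 : ℝ) / (m : ℕ)) ∧
    (∑' m : SigmaSet d N, (1 : ℝ) / (m : ℕ)) ≤
      (1 / d) * (∑' m : PiSet N, ((m : ℕ) : ℝ) ^ (-(1 : ℝ) / d)) ^ d ∧
    (∑' m : PiSet N, ((m : ℕ) : ℝ) ^ (-(1 : ℝ) / d)) =
      ∏ p ∈ (Finset.range (N + 1)).filter Nat.Prime,
        1 / (1 - (p : ℝ) ^ (-(1 : ℝ) / d)) := by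
  have hd0 : (0 : ℝ) < d := by exact_mod_cast hd
  -- the completely multiplicative function
  set F : ℕ →* ℝ :=
    { toFun := fun n => (n : ℝ) ^ (-(1 : ℝ) / d)
      map_one' := by simp
      map_mul' := fun m n => by
        push_cast
        exact Real.mul_rpow m.cast_nonneg n.cast_nonneg } with hF
  have hFval : ∀ n : ℕ, F n = (n : ℝ) ^ (-(1 : ℝ) / d) := fun n => rfl
  have hnegdiv : -(1 : ℝ) / d < 0 := by
    rw [neg_div]
    exact neg_neg_iff_pos.mpr (by positivity)
  have hlt : ∀ {p : ℕ}, p.Prime → ‖F p‖ < 1 := by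
    intro p hp
    rw [hFval, Real.norm_eq_abs, abs_of_nonneg (Real.rpow_nonneg p.cast_nonneg _)]
    exact Real.rpow_lt_one_of_one_lt_of_neg (by exact_mod_cast hp.one_lt) hnegdiv
  have key := EulerProduct.summable_and_hasSum_smoothNumbers_prod_primesBelow_geometric
    (F := ℝ) (f := F) hlt (N + 1)
  have hset : PiSet N = Nat.smoothNumbers (N + 1) := by
    ext m
    constructor
    · rintro ⟨hm, h⟩
      exact Nat.mem_smoothNumbers.mpr ⟨hm.ne', fun p hp =>
        Nat.lt_succ_of_le (h p (Nat.prime_of_mem_primeFactorsList hp)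
          (Nat.dvd_of_mem_primeFactorsList hp))⟩
    · intro h
      obtain ⟨h0, h1⟩ := Nat.mem_smoothNumbers.mp h
      exact ⟨Nat.pos_of_ne_zero h0, fun p pp dvd =>
        Nat.lt_succ_iff.mp (h1 p ((Nat.mem_primeFactorsList h0).mpr ⟨pp, dvd⟩))⟩
  -- part 1
  have part1 : Summable (fun m : PiSet N => ((m : ℕ) : ℝ) ^ (-(1 : ℝ) / d)) := by
    rw [hset]
    exact (key.1.of_norm).congr fun m => rfl
  -- part 4
  have part4 : (∑' m : PiSet N, ((m : ℕ) : ℝ) ^ (-(1 : ℝ) / d)) =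
      ∏ p ∈ (Finset.range (N + 1)).filter Nat.Prime,
        1 / (1 - (p : ℝ) ^ (-(1 : ℝ) / d)) := by
    rw [hset]
    have := key.2.tsum_eq
    rw [show (fun m : Nat.smoothNumbers (N + 1) => ((m : ℕ) : ℝ) ^ (-(1 : ℝ) / d)) =
      (fun m : Nat.smoothNumbers (N + 1) => F m) from rfl, this]
    rw [Nat.primesBelow]
    exact Finset.prod_congr rfl fun p _ => by rw [hFval, one_div]
  -- representative choice
  set gP : PiSet N → ℝ := fun b => ((b : ℕ) : ℝ) ^ (-(1 : ℝ) / d) with hgP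
  have hgP0 : ∀ b, 0 ≤ gP b := fun b => Real.rpow_nonneg (Nat.cast_nonneg _) _
  obtain ⟨hFd, hFdsum⟩ := aux_pi_prod gP hgP0 part1 d
  have hdpos : 0 < d := hd
  haveI : NeZero d := ⟨hdpos.ne'⟩
  set rep : SigmaSet d N → (Fin d → PiSet N) := fun m =>
    fun i => ⟨m.2.choose i, m.2.choose_spec.1 i⟩ with hrep
  have hrepsum : ∀ m : SigmaSet d N, (m : ℕ) = ∑ i, (rep m i : ℕ) := by
    intro m
    have := m.2.choose_spec.2
    simp only [hrep]
    exact this.symm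
  have hinj : Function.Injective rep := by
    intro m m' h
    apply Subtype.ext
    rw [hrepsum m, hrepsum m', h]
  have hbound : ∀ m : SigmaSet d N,
      (1 : ℝ) / (m : ℕ) ≤ (1 / d) * ∏ i, gP (rep m i) := by
    intro m
    rw [hrepsum m]
    exact aux_amgm d hd (fun i => (rep m i : ℕ)) (fun i => (rep m i).2.1)
  have hFdcomp : Summable ((fun f : Fin d → PiSet N => ∏ i, gP (f i)) ∘ rep) :=
    hFd.comp_injective hinj
  have hmaj : Summable (fun m : SigmaSet d N => (1 / (d : ℝ)) * ∏ i, gP (rep m i)) :=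
    hFdcomp.mul_left _
  have part2 : Summable (fun m : SigmaSet d N => (1 : ℝ) / (m : ℕ)) :=
    Summable.of_nonneg_of_le (fun m => by positivity) hbound hmaj
  have part3 : (∑' m : SigmaSet d N, (1 : ℝ) / (m : ℕ)) ≤
      (1 / d) * (∑' m : PiSet N, ((m : ℕ) : ℝ) ^ (-(1 : ℝ) / d)) ^ d := by
    calc (∑' m : SigmaSet d N, (1 : ℝ) / (m : ℕ))
        ≤ ∑' m : SigmaSet d N, (1 / (d : ℝ)) * ∏ i, gP (rep m i) :=
          Summable.tsum_le_tsum hbound part2 hmaj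
      _ = (1 / (d : ℝ)) * ∑' m : SigmaSet d N, ∏ i, gP (rep m i) := tsum_mul_left
      _ ≤ (1 / (d : ℝ)) * ∑' f : Fin d → PiSet N, ∏ i, gP (f i) := by
          refine mul_le_mul_of_nonneg_left ?_ (by positivity)
          exact Summable.tsum_le_tsum_of_inj rep hinj
            (fun c _ => Finset.prod_nonneg fun i _ => hgP0 _)
            (fun m => le_rfl) hFdcomp hFd
      _ = (1 / (d : ℝ)) * (∑' m : PiSet N, ((m : ℕ) : ℝ) ^ (-(1 : ℝ) / d)) ^ d := by
          rw [hFdsum]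
  exact ⟨part1, part2, part3, part4⟩
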